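/- For an irrational real number α with continued fraction convergents s_n/t_n, one has: limsup_{n→∞} (log t_{n+1})/(log t_n) = ∞ if and only if α is a Liouville number. -/

import Mathlib

open Filter Real GenContFract

lemma my_not_term {α : ℝ} (hα : Irrational α) (n : ℕ) :
    ¬(GenContFract.of α).TerminatedAt n := fun h => by
  have ht : (GenContFract.of α).Terminates := ⟨n, h⟩
  rcases GenContFract.exists_rat_eq_of_terminates ht with ⟨q, hq⟩
  exact hα ⟨q, hq.symm⟩

lemma my_contsAux_int {α : ℝ} (hα : Irrational α) :
    ∀ n : ℕ, (∃ a : ℤ, ((GenContFract.of α).contsAux n).a = (a : ℝ)) ∧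
      ∃ b : ℤ, ((GenContFract.of α).contsAux n).b = (b : ℝ) := by
  have key : ∀ n : ℕ,
      ((∃ a : ℤ, ((GenContFract.of α).contsAux n).a = (a : ℝ)) ∧
        ∃ b : ℤ, ((GenContFract.of α).contsAux n).b = (b : ℝ)) ∧
      ((∃ a : ℤ, ((GenContFract.of α).contsAux (n+1)).a = (a : ℝ)) ∧
        ∃ b : ℤ, ((GenContFract.of α).contsAux (n+1)).b = (b : ℝ)) := by
    intro n
    induction n with
    | zero =>
      refine ⟨⟨⟨1, ?_⟩, ⟨0, ?_⟩⟩, ⟨⟨⌊α⌋, ?_⟩, ⟨1, ?_⟩⟩⟩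
      · rw [GenContFract.zeroth_contAux_eq_one_zero]; norm_num
      · rw [GenContFract.zeroth_contAux_eq_one_zero]; norm_num
      · rw [GenContFract.first_contAux_eq_h_one]; exact GenContFract.of_h_eq_floor
      · rw [GenContFract.first_contAux_eq_h_one]; norm_num
    | succ n ih =>
      refine ⟨ih.2, ?_⟩
      obtain ⟨gp, s_nth_eq⟩ : ∃ gp, (GenContFract.of α).s.get? n = some gp :=
        Option.ne_none_iff_exists'.1 (my_not_term hα n)
      have gp_a : gp.a = 1 := of_partNum_eq_one (partNum_eq_s_a s_nth_eq)
      obtain ⟨z, gp_b⟩ : ∃ z : ℤ, gp.b = (z : ℝ) :=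
        exists_int_eq_of_partDen (partDen_eq_s_b s_nth_eq)
      have hrec := GenContFract.contsAux_recurrence s_nth_eq rfl rfl
      obtain ⟨⟨a0, ha0⟩, ⟨b0, hb0⟩⟩ := ih.1
      obtain ⟨⟨a1, ha1⟩, ⟨b1, hb1⟩⟩ := ih.2
      rw [hrec]
      exact ⟨⟨z * a1 + a0, by simp [gp_a, gp_b, ha0, ha1]⟩,
        ⟨z * b1 + b0, by simp [gp_a, gp_b, hb0, hb1]⟩⟩
  exact fun n => (key n).1

lemma my_num_int {α : ℝ} (hα : Irrational α) (n : ℕ) :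
    ∃ a : ℤ, (GenContFract.of α).nums n = (a : ℝ) := by
  rw [num_eq_conts_a, nth_cont_eq_succ_nth_contAux]
  exact (my_contsAux_int hα (n+1)).1

lemma my_den_int {α : ℝ} (hα : Irrational α) (n : ℕ) :
    ∃ b : ℤ, (GenContFract.of α).dens n = (b : ℝ) := by
  rw [den_eq_conts_b, nth_cont_eq_succ_nth_contAux]
  exact (my_contsAux_int hα (n+1)).2

lemma my_fib_le {α : ℝ} (hα : Irrational α) (n : ℕ) :
    (Nat.fib (n+1) : ℝ) ≤ (GenContFract.of α).dens n :=
  succ_nth_fib_le_of_nth_den (Or.inr (my_not_term hα _))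

lemma my_den_pos {α : ℝ} (hα : Irrational α) (n : ℕ) :
    (1 : ℝ) ≤ (GenContFract.of α).dens n := by
  have := my_fib_le hα n
  have h1 : (1 : ℕ) ≤ Nat.fib (n+1) := Nat.fib_pos.2 n.succ_pos
  calc (1:ℝ) ≤ (Nat.fib (n+1) : ℝ) := by exact_mod_cast h1
    _ ≤ _ := this

lemma my_den_two_le {α : ℝ} (hα : Irrational α) {n : ℕ} (hn : 2 ≤ n) :
    (2 : ℝ) ≤ (GenContFract.of α).dens n := by
  have := my_fib_le hα n
  have h2 : (2 : ℕ) ≤ Nat.fib (n+1) := by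
    have := Nat.fib_mono (show 3 ≤ n + 1 by omega)
    exact le_trans (by norm_num : 2 ≤ Nat.fib 3) this
  calc (2:ℝ) ≤ (Nat.fib (n+1) : ℝ) := by exact_mod_cast h2
    _ ≤ _ := this

lemma my_den_mono {α : ℝ} : Monotone ((GenContFract.of α).dens) :=
  monotone_nat_of_le_succ fun _ => of_den_mono

lemma my_lower {α : ℝ} (hα : Irrational α) (n : ℕ) :
    1 / (2 * (GenContFract.of α).dens n * (GenContFract.of α).dens (n+1)) <
      |α - (GenContFract.of α).convs n| := by
  obtain ⟨gp, s_nth_eq⟩ : ∃ gp, (GenContFract.of α).s.get? n = some gp :=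
    Option.ne_none_iff_exists'.1 (my_not_term hα n)
  have gp_a : gp.a = 1 := of_partNum_eq_one (partNum_eq_s_a s_nth_eq)
  obtain ⟨ifp_succ, succ_stream_eq, ifp_succ_b⟩ :=
    IntFractPair.exists_succ_get?_stream_of_gcf_of_get?_eq_some s_nth_eq
  obtain ⟨ifp, stream_eq, fr_ne_zero, of_eq⟩ :=
    IntFractPair.succ_nth_stream_eq_some_iff.1 succ_stream_eq
  set B : ℝ := ((GenContFract.of α).contsAux (n+1)).b with hB
  set pB : ℝ := ((GenContFract.of α).contsAux n).b with hpB
  have hsub : α - (GenContFract.of α).convs n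
      = (-1) ^ n / (B * (ifp.fr⁻¹ * B + pB)) := by
    have := GenContFract.sub_convs_eq stream_eq
    simpa [fr_ne_zero, ← hB, ← hpB] using this
  -- facts
  have hfr_pos : 0 < ifp.fr :=
    lt_of_le_of_ne (IntFractPair.nth_stream_fr_nonneg stream_eq) (Ne.symm fr_ne_zero)
  have hfrinv_pos : 0 < ifp.fr⁻¹ := inv_pos.2 hfr_pos
  have hfloor : ifp.fr⁻¹ < (ifp_succ.b : ℝ) + 1 := by
    have : ifp_succ.b = ⌊ifp.fr⁻¹⌋ := by rw [← of_eq]; rfl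
    rw [this]
    exact Int.lt_floor_add_one _
  have hBden : B = (GenContFract.of α).dens n := by
    rw [den_eq_conts_b, nth_cont_eq_succ_nth_contAux]
  have hpB_nonneg : 0 ≤ pB := zero_le_of_contsAux_b
  have hB_pos : (1:ℝ) ≤ B := by rw [hBden]; exact my_den_pos hα n
  have hrec := GenContFract.contsAux_recurrence s_nth_eq rfl rfl
  have hden_succ : (GenContFract.of α).dens (n+1) = gp.b * B + pB := by
    rw [den_eq_conts_b, nth_cont_eq_succ_nth_contAux, hrec, gp_a]
    simp [← hB, ← hpB]
  have hgpb : (ifp_succ.b : ℝ) = gp.b := ifp_succ_b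
  have hmono : B ≤ (GenContFract.of α).dens (n+1) := by
    rw [hBden]; exact my_den_mono (Nat.le_succ n)
  -- denominator comparison
  have hcomp : ifp.fr⁻¹ * B + pB < 2 * (GenContFract.of α).dens (n+1) := by
    have h1 : ifp.fr⁻¹ * B < (gp.b + 1) * B := by
      apply mul_lt_mul_of_pos_right _ (by linarith)
      rw [← hgpb]; exact hfloor
    nlinarith [hden_succ, hmono, hpB_nonneg]
  have habs : |α - (GenContFract.of α).convs n| = 1 / (B * (ifp.fr⁻¹ * B + pB)) := by
    rw [hsub, abs_div, abs_neg_one_pow, abs_of_pos]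
    positivity
  rw [habs, hBden.symm]
  have hd_pos : 0 < B * (ifp.fr⁻¹ * B + pB) := by positivity
  apply one_div_lt_one_div_of_lt hd_pos
  have hB0 : 0 < B := by linarith
  calc B * (ifp.fr⁻¹ * B + pB) < B * (2 * (GenContFract.of α).dens (n+1)) := by
        exact mul_lt_mul_of_pos_left hcomp hB0
    _ = 2 * B * (GenContFract.of α).dens (n+1) := by ring

lemma my_pow_helper {x : ℝ} (hx : 2 ≤ x) : 4 * x^2 < x^(6:ℕ) := by
  have h2 : (4:ℝ) ≤ x^2 := by nlinarith
  have h4 : (16:ℝ) ≤ x^4 := by nlinarith [sq_nonneg (x^2 - 4)]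
  nlinarith [h2, h4, sq_nonneg x]

set_option maxHeartbeats 1000000 in
theorem liouville_iff_limsup_log_dens_ratio (α : ℝ) (hα : Irrational α) :
    (∀ C : ℝ, ∃ᶠ n : ℕ in Filter.atTop,
        C < Real.log ((GenContFract.of α).dens (n + 1)) /
              Real.log ((GenContFract.of α).dens n)) ↔
      Liouville α := by
  constructor
  · -- limsup ⇒ Liouville
    intro h m
    obtain ⟨n, hn2, hr⟩ := Filter.frequently_atTop.1 (h m) 2
    obtain ⟨a, ha⟩ := my_num_int hα n
    obtain ⟨b, hb⟩ := my_den_int hα n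
    have hB2 : (2:ℝ) ≤ (GenContFract.of α).dens n := my_den_two_le hα hn2
    have hb2 : 1 < b := by
      have : (2:ℝ) ≤ (b:ℝ) := hb ▸ hB2
      exact_mod_cast (by linarith : (1:ℝ) < (b:ℝ))
    have hconv : (GenContFract.of α).convs n = (a:ℝ) / b := by
      rw [conv_eq_num_div_den, ha, hb]
    have hne : α ≠ (a:ℝ) / b := by
      intro hcontr
      exact hα ⟨(a:ℚ)/(b:ℚ), by rw [hcontr]; push_cast; ring⟩
    refine ⟨a, b, hb2, hne, ?_⟩
    -- bound
    have hlogB : 0 < Real.log ((GenContFract.of α).dens n) := by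
      apply Real.log_pos; linarith
    have hmul : (m:ℝ) * Real.log ((GenContFract.of α).dens n)
        < Real.log ((GenContFract.of α).dens (n+1)) := by
      rw [← lt_div_iff₀ hlogB]; exact hr
    have hBpow : ((GenContFract.of α).dens n) ^ m < (GenContFract.of α).dens (n+1) := by
      have h1 : Real.log (((GenContFract.of α).dens n) ^ m)
          < Real.log ((GenContFract.of α).dens (n+1)) := by
        rw [Real.log_pow]; exact hmul
      have hp : (0:ℝ) < ((GenContFract.of α).dens n) ^ m := by positivity
      exact (Real.log_lt_log_iff hp (by linarith [my_den_pos hα (n+1)])).1 h1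
    have hub := GenContFract.abs_sub_convs_le (v := α) (n := n) (my_not_term hα n)
    rw [hconv] at hub
    calc |α - (a:ℝ)/b| ≤ 1 / ((GenContFract.of α).dens n * (GenContFract.of α).dens (n+1)) := hub
      _ < 1 / ((b:ℝ)) ^ m := by
          apply one_div_lt_one_div_of_lt
          · positivity
          · rw [← hb]
            nlinarith [my_den_pos hα (n+1)]
  · -- Liouville ⇒ limsup
    intro hL C
    rw [Filter.frequently_atTop]
    intro N₀
    set C' : ℝ := max C 1 with hC'
    have hC1 : 1 ≤ C' := le_max_right _ _
    have hCC : C ≤ C' := le_max_left _ _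
    set t : ℝ := 2 * C' + 4 with ht
    have hLW : LiouvilleWith (t + 1) α := (forall_liouvilleWith_iff.2 hL) (t+1)
    have hfreq := hLW.frequently_lt_rpow_neg (lt_add_one t)
    set M : ℕ := max N₀ 2 with hM
    obtain ⟨d, hdD, m, hne, happrox⟩ := Filter.frequently_atTop.1 hfreq
      (max 2 (⌈(GenContFract.of α).dens M⌉₊))
    have hd2 : (2:ℝ) ≤ (d:ℝ) := by exact_mod_cast le_trans (le_max_left _ _) hdD
    have hd0 : (0:ℝ) < d := by linarith
    have hdM : (GenContFract.of α).dens M ≤ (d:ℝ) := by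
      calc (GenContFract.of α).dens M ≤ (⌈(GenContFract.of α).dens M⌉₊ : ℝ) := Nat.le_ceil _
        _ ≤ (d:ℝ) := by exact_mod_cast le_trans (le_max_right _ _) hdD
    -- find minimal n with dens (n+1) ≥ 2d
    have hex : ∃ k, 2 * (d:ℝ) ≤ (GenContFract.of α).dens (k+1) := by
      refine ⟨max (2*d) 5, ?_⟩
      have h5 : 5 ≤ max (2*d) 5 := le_max_right _ _
      have h1 : max (2*d) 5 ≤ Nat.fib (max (2*d) 5) := Nat.le_fib_self h5
      have h2 : Nat.fib (max (2*d) 5) ≤ Nat.fib (max (2*d) 5 + 2) := Nat.fib_mono (by omega)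
      have h3 : 2 * d ≤ Nat.fib (max (2*d) 5 + 2) := le_trans (le_trans (le_max_left _ _) h1) h2
      calc (2:ℝ) * d = ((2 * d : ℕ) : ℝ) := by push_cast; ring
        _ ≤ (Nat.fib (max (2*d) 5 + 2) : ℝ) := by exact_mod_cast h3
        _ ≤ _ := my_fib_le hα _
    classical
    obtain ⟨n, hnspec, hnmin⟩ : ∃ n : ℕ, 2 * (d:ℝ) ≤ (GenContFract.of α).dens (n+1) ∧
        ∀ k < n, ¬(2 * (d:ℝ) ≤ (GenContFract.of α).dens (k+1)) :=
      ⟨Nat.find hex, Nat.find_spec hex, fun k hk => Nat.find_min hex hk⟩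
    have hnM : M ≤ n := by
      by_contra hcon
      push_neg at hcon
      have : (GenContFract.of α).dens (n+1) ≤ (GenContFract.of α).dens M :=
        my_den_mono (by omega)
      linarith
    have hn2 : 2 ≤ n := le_trans (le_max_right _ _) hnM
    have hBlt : (GenContFract.of α).dens n < 2 * d := by
      have hmin := hnmin (n - 1) (show n - 1 < n by omega)
      rw [show n - 1 + 1 = n by omega] at hmin
      push_neg at hmin
      exact hmin
    set B : ℝ := (GenContFract.of α).dens n with hB
    set B' : ℝ := (GenContFract.of α).dens (n+1) with hB'
    have hB2 : (2:ℝ) ≤ B := my_den_two_le hα hn2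
    have hB'pos : (1:ℝ) ≤ B' := my_den_pos hα (n+1)
    -- the approximation must be the convergent
    obtain ⟨a, ha⟩ := my_num_int hα n
    obtain ⟨b, hbden⟩ := my_den_int hα n
    have hconv : (GenContFract.of α).convs n = (a:ℝ) / b := by
      rw [conv_eq_num_div_den, ha, hbden]
    have hbpos : (0:ℝ) < (b:ℝ) := by rw [← hbden]; linarith
    have hdt_pos : (0:ℝ) < (d:ℝ) ^ t := Real.rpow_pos_of_pos hd0 t
    have hrpow : ((d:ℝ)) ^ (-t) = 1 / (d:ℝ) ^ t := by
      rw [Real.rpow_neg (le_of_lt hd0), one_div]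
    have ht6 : (6:ℝ) ≤ t := by simp only [ht]; linarith
    have hd6 : (d:ℝ) ^ (6:ℝ) ≤ (d:ℝ) ^ t :=
      Real.rpow_le_rpow_of_exponent_le (by linarith) ht6
    have hd6' : ((d:ℝ))^(6:ℕ) ≤ (d:ℝ) ^ t := by
      calc ((d:ℝ))^(6:ℕ) = (d:ℝ)^((6:ℕ):ℝ) := (Real.rpow_natCast _ 6).symm
        _ = (d:ℝ)^(6:ℝ) := by norm_num
        _ ≤ (d:ℝ)^t := hd6
    have hcase : (m:ℝ) / d = (GenContFract.of α).convs n := by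
      by_contra hne2
      -- case B: contradiction
      have hnum : ((m * b - a * d : ℤ) : ℝ) ≠ 0 := by
        intro h0
        apply hne2
        rw [hconv]
        rw [div_eq_div_iff (by linarith) (by linarith)]
        push_cast at h0 ⊢
        linarith
      have h1le : (1:ℝ) ≤ |(m:ℝ) * b - (d:ℝ) * a| := by
        have h := Int.one_le_abs (show m * b - a * (d:ℤ) ≠ 0 by exact_mod_cast hnum)
        calc (1:ℝ) ≤ ((|m * b - a * (d:ℤ)| : ℤ) : ℝ) := by exact_mod_cast h
          _ = |(m:ℝ) * b - (d:ℝ) * a| := by push_cast; ring_nf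
      have hsep : 1 / ((d:ℝ) * b) ≤ |(m:ℝ)/d - (a:ℝ)/b| := by
        rw [div_sub_div _ _ (by linarith : (d:ℝ) ≠ 0) (by linarith : (b:ℝ) ≠ 0), abs_div,
          abs_of_pos (by positivity : (0:ℝ) < (d:ℝ) * b)]
        apply div_le_div_of_nonneg_right h1le (by positivity)
      have hub := GenContFract.abs_sub_convs_le (v := α) (n := n) (my_not_term hα n)
      rw [hconv] at hub
      have hub2 : |α - (a:ℝ)/b| ≤ 1 / ((b:ℝ) * (2 * d)) := by
        refine le_trans hub ?_
        rw [← hbden]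
        apply one_div_le_one_div_of_le (by positivity)
        have : (2:ℝ)*d ≤ B' := hnspec
        nlinarith
      have htri : 1 / ((d:ℝ) * b) ≤ |α - (m:ℝ)/d| + |α - (a:ℝ)/b| := by
        calc 1 / ((d:ℝ) * b) ≤ |(m:ℝ)/d - (a:ℝ)/b| := hsep
          _ ≤ |α - (m:ℝ)/d| + |α - (a:ℝ)/b| := by
              have := abs_sub_abs_le_abs_sub ((m:ℝ)/d - α) ((a:ℝ)/b - α)
              calc |(m:ℝ)/d - (a:ℝ)/b| = |((m:ℝ)/d - α) - ((a:ℝ)/b - α)| := by ring_nf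
                _ ≤ |(m:ℝ)/d - α| + |(a:ℝ)/b - α| := abs_sub _ _
                _ = |α - (m:ℝ)/d| + |α - (a:ℝ)/b| := by rw [abs_sub_comm, abs_sub_comm ((a:ℝ)/b) α]
      have happ' : |α - (m:ℝ)/d| < 1/(d:ℝ)^t := by rw [← hrpow]; exact happrox
      have h2 : 1/((d:ℝ)*b) < 1/(d:ℝ)^t + 1/((b:ℝ)*(2*d)) := by linarith
      have h3 : 1/((b:ℝ)*(2*d)) = (1/2) * (1/((d:ℝ)*b)) := by
        rw [one_div, one_div]
        field_simp
      have h4 : 1/(2*(d:ℝ)*b) = (1/2) * (1/((d:ℝ)*b)) := by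
        rw [one_div, one_div]
        field_simp
      have hfinal : 1 / (2 * (d:ℝ) * b) < 1 / (d:ℝ)^t := by
        rw [h4]; rw [h3] at h2; linarith
      have hdt : (d:ℝ)^t < 2 * d * b :=
        lt_of_one_div_lt_one_div (by positivity) hfinal
      have hb4d : (b:ℝ) < 2 * d := by rw [← hbden]; exact hBlt
      have hA : 2*(d:ℝ)*b < 4*(d:ℝ)^2 := by
        calc 2*(d:ℝ)*b = (2*(d:ℝ))*b := by ring
          _ < (2*(d:ℝ))*(2*d) := mul_lt_mul_of_pos_left hb4d (by linarith)
          _ = 4*(d:ℝ)^2 := by ring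
      exact absurd ((hd6'.trans_lt hdt).trans hA) (not_lt.2 (my_pow_helper hd2).le)
    -- case A: main estimate
    rw [hcase] at happrox
    have hlow := my_lower hα n
    have hlt : 1 / (2 * B * B') < 1 / (d:ℝ)^t := by
      rw [← hrpow]; exact lt_trans hlow happrox
    have hdt : (d:ℝ)^t < 2 * B * B' := lt_of_one_div_lt_one_div (by positivity) hlt
    have hB'pos0 : (0:ℝ) < B' := by linarith
    have hB'big : (d:ℝ)^t < 4 * d * B' := by
      calc (d:ℝ)^t < 2 * B * B' := hdt
        _ = (2*B) * B' := by ring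
        _ < (4*(d:ℝ)) * B' := mul_lt_mul_of_pos_right (by linarith) hB'pos0
        _ = 4 * d * B' := by ring
    -- logs
    have hlogd : Real.log 2 ≤ Real.log d := Real.log_le_log (by norm_num) hd2
    have hlog2 : (0:ℝ) < Real.log 2 := Real.log_pos (by norm_num)
    have hlogB : Real.log B ≤ Real.log 2 + Real.log d := by
      calc Real.log B ≤ Real.log (2 * d) := Real.log_le_log (by linarith) (le_of_lt hBlt)
        _ = Real.log 2 + Real.log d := Real.log_mul (by norm_num) (by linarith)
    have hlogB' : (t - 1) * Real.log d - 2 * Real.log 2 < Real.log B' := by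
      have h1 : Real.log ((d:ℝ)^t) < Real.log (4 * d * B') :=
        Real.log_lt_log hdt_pos hB'big
      rw [Real.log_rpow hd0] at h1
      have h2 : Real.log (4 * d * B') = Real.log 4 + Real.log d + Real.log B' := by
        rw [Real.log_mul (by positivity) (by linarith), Real.log_mul (by norm_num) (by linarith)]
      have h4 : Real.log 4 = 2 * Real.log 2 := by
        rw [show (4:ℝ) = 2^2 by norm_num, Real.log_pow]; push_cast; ring
      rw [h2, h4] at h1
      linarith
    have hlogBpos : 0 < Real.log B := Real.log_pos (by linarith)
    refine ⟨n, le_trans (le_max_left _ _) hnM, ?_⟩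
    have hfin : C' * Real.log B < Real.log B' := by
      have e1 : C' * Real.log B ≤ C' * Real.log 2 + C' * Real.log d := by
        calc C' * Real.log B ≤ C' * (Real.log 2 + Real.log d) :=
              mul_le_mul_of_nonneg_left hlogB (by linarith)
          _ = C' * Real.log 2 + C' * Real.log d := by ring
      have p1 : C' * Real.log 2 ≤ C' * Real.log d :=
        mul_le_mul_of_nonneg_left hlogd (by linarith)
      have e2 : (t - 1) * Real.log d = 2 * (C' * Real.log d) + 3 * Real.log d := by
        rw [ht]; ring
      linarith [hlogB']
    calc C ≤ C' := hCC
      _ < Real.log B' / Real.log B := by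
          rw [lt_div_iff₀ hlogBpos]
          calc C' * Real.log B < Real.log B' := hfin
            _ = Real.log B' := rfl
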